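/- In the monoid ring K[M] of Thompson's monoid over a field K, for every k ≥ 2 there exist ξ_k, η_k in K[M_1] (the subring generated by x_1, x_2, ...) with deg ξ_k ≤ k - 1 and deg η_k ≤ k - 1 such that x_0^k ≡ x_0·ξ_k + η_k modulo the principal right ideal v_0·K[M], where v_0 = 1 - x_3 - x_0^2 + x_0 x_1. -/

import Mathlib

/-- The defining relation of Thompson's monoid: `x_j x_i = x_i x_{j+1}` for `i < j`. -/
def thompsonRel : FreeMonoid ℕ → FreeMonoid ℕ → Prop := fun a b =>
  ∃ i j : ℕ, i < j ∧ a = FreeMonoid.of j * FreeMonoid.of i ∧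
    b = FreeMonoid.of i * FreeMonoid.of (j + 1)

/-- The congruence on the free monoid generated by the Thompson relations. -/
def thompsonCon : Con (FreeMonoid ℕ) := conGen thompsonRel

/-- Thompson's monoid `M`. -/
abbrev ThompsonM := thompsonCon.Quotient

/-- The generators `x_n` of Thompson's monoid. -/
def xM (n : ℕ) : ThompsonM := thompsonCon.mk' (FreeMonoid.of n)

/-- The shift endomorphism `φ : M → M`, `x_i ↦ x_{i+1}`. -/
def shiftM : ThompsonM →* ThompsonM :=
  Con.lift _ ((Con.mk' thompsonCon).comp (FreeMonoid.map Nat.succ)) (by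
    apply Con.conGen_le.2
    rintro a b ⟨i, j, hij, rfl, rfl⟩
    simp only [Con.ker_rel, MonoidHom.comp_apply, map_mul, FreeMonoid.map_of]
    exact Con.eq _ |>.2 (ConGen.Rel.of _ _ ⟨i + 1, j + 1, by omega, rfl, rfl⟩))

/-- The relators of Thompson's group `F` (infinite presentation). -/
def thompsonRels : Set (FreeGroup ℕ) :=
  {w | ∃ i j : ℕ, i < j ∧
    w = FreeGroup.of j * FreeGroup.of i * (FreeGroup.of i * FreeGroup.of (j + 1))⁻¹}

/-- Thompson's group `F`. -/
abbrev ThompsonF := PresentedGroup thompsonRels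

/-- The generators `x_n` of Thompson's group. -/
def xF (n : ℕ) : ThompsonF := PresentedGroup.of n

/-- Word length, as a monoid homomorphism on the free monoid. -/
def lenHom : FreeMonoid ℕ →* Multiplicative ℕ where
  toFun w := Multiplicative.ofAdd w.length
  map_one' := by simp
  map_mul' a b := by
    simp [FreeMonoid.length_mul, ofAdd_add]

/-- Length is well defined on Thompson's monoid. -/
def lenM : ThompsonM →* Multiplicative ℕ :=
  Con.lift _ lenHom (by
    apply Con.conGen_le.2
    rintro a b ⟨i, j, hij, rfl, rfl⟩
    simp [Con.ker_rel, lenHom, FreeMonoid.length_mul]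
    rfl)

/-- The length of an element of Thompson's monoid. -/
def mlen (g : ThompsonM) : ℕ := Multiplicative.toAdd (lenM g)

/-- The degree of an element of the monoid ring `K[M]`. -/
noncomputable def mdeg {K : Type*} [Field K] (a : MonoidAlgebra K ThompsonM) : ℕ :=
  a.coeff.support.sup mlen

/-- The submonoid `M_i` of `M` generated by `x_i, x_{i+1}, …`. -/
def Msub (i : ℕ) : Submonoid ThompsonM :=
  Submonoid.closure {g | ∃ n : ℕ, i ≤ n ∧ g = xM n}

/-- The shift endomorphism of the monoid ring `K[M]` induced by `φ`. -/
noncomputable def shiftA (K : Type*) [Field K] :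
    MonoidAlgebra K ThompsonM →+* MonoidAlgebra K ThompsonM :=
  MonoidAlgebra.mapDomainRingHom K shiftM

/-- The natural homomorphism of Thompson's monoid into Thompson's group. -/
def iotaMF : ThompsonM →* ThompsonF :=
  Con.lift _ (FreeMonoid.lift xF) (by
    apply Con.conGen_le.2
    rintro a b ⟨i, j, hij, rfl, rfl⟩
    simp only [Con.ker_rel, map_mul, FreeMonoid.lift_eval_of]
    have h : (FreeGroup.of j * FreeGroup.of i *
        (FreeGroup.of i * FreeGroup.of (j + 1))⁻¹ : FreeGroup ℕ) ∈ thompsonRels :=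
      ⟨i, j, hij, rfl⟩
    have h1 : PresentedGroup.mk thompsonRels
        (FreeGroup.of j * FreeGroup.of i * (FreeGroup.of i * FreeGroup.of (j + 1))⁻¹) = 1 := by
      exact (QuotientGroup.eq_one_iff _).2 (Subgroup.subset_normalClosure h)
    have := h1
    rw [map_mul, map_mul, map_inv, map_mul, mul_inv_eq_one] at this
    simpa [xF, PresentedGroup.of] using this)

/-- The generator `x_n` as an element of the group ring `K[F]`. -/
noncomputable def XF (K : Type*) [Field K] (n : ℕ) : MonoidAlgebra K ThompsonF :=
  MonoidAlgebra.of K ThompsonF (xF n)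

/-- The generator `x_n` as an element of the monoid ring `K[M]`. -/
noncomputable def XMa (K : Type*) [Field K] (n : ℕ) : MonoidAlgebra K ThompsonM :=
  MonoidAlgebra.of K ThompsonM (xM n)

section Aux

open MonoidAlgebra

variable {K : Type*} [Field K]

lemma xM_rel {i j : ℕ} (hij : i < j) : xM j * xM i = xM i * xM (j + 1) := by
  have : thompsonCon (FreeMonoid.of j * FreeMonoid.of i)
      (FreeMonoid.of i * FreeMonoid.of (j + 1)) :=
    ConGen.Rel.of _ _ ⟨i, j, hij, rfl, rfl⟩
  simpa [xM, ← map_mul] using (Con.eq _).2 this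

lemma shiftM_xM (n : ℕ) : shiftM (xM n) = xM (n + 1) := by
  simp [shiftM, xM, Con.lift_coe]
  rfl

lemma xM_mem_Msub {i n : ℕ} (h : i ≤ n) : xM n ∈ Msub i :=
  Submonoid.subset_closure ⟨n, h, rfl⟩

lemma shiftM_mem (g : ThompsonM) : shiftM g ∈ Msub 1 := by
  induction g using Con.induction_on with
  | H w =>
    induction w using FreeMonoid.recOn with
    | one => simpa using (Msub 1).one_mem
    | of_mul n w ih =>
      have : (↑(FreeMonoid.of n * w) : ThompsonM) = xM n * ↑w := rfl
      rw [this, map_mul, shiftM_xM]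
      exact (Msub 1).mul_mem (xM_mem_Msub (by omega)) ih

lemma mlen_mul (g h : ThompsonM) : mlen (g * h) = mlen g + mlen h := by
  simp [mlen, map_mul, toAdd_mul]

lemma mlen_xM (n : ℕ) : mlen (xM n) = 1 := by
  simp [mlen, lenM, xM, Con.lift_coe, lenHom]
  rfl

lemma mlen_one : mlen (1 : ThompsonM) = 0 := by simp [mlen]

lemma mlen_shiftM (g : ThompsonM) : mlen (shiftM g) = mlen g := by
  induction g using Con.induction_on with
  | H w =>
    induction w using FreeMonoid.recOn with
    | one => simp
    | of_mul n w ih =>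
      have : (↑(FreeMonoid.of n * w) : ThompsonM) = xM n * ↑w := rfl
      rw [this, map_mul, shiftM_xM, mlen_mul, mlen_mul, mlen_xM, mlen_xM, ih]

lemma gen_comm {g : ThompsonM} (hg : g ∈ Msub 1) : g * xM 0 = xM 0 * shiftM g := by
  induction hg using Submonoid.closure_induction with
  | mem h hh =>
    obtain ⟨n, hn, rfl⟩ := hh
    rw [shiftM_xM]
    exact xM_rel hn
  | one => simp
  | mul a b _ _ ha hb => rw [mul_assoc, hb, ← mul_assoc, ha, map_mul, mul_assoc]

lemma shiftA_single (g : ThompsonM) (c : K) :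
    shiftA K (MonoidAlgebra.single g c) = MonoidAlgebra.single (shiftM g) c := by
  simp [shiftA, MonoidAlgebra.mapDomainRingHom, Finsupp.mapDomain_single, MonoidAlgebra.mapDomain_single]

lemma alg_comm {a : MonoidAlgebra K ThompsonM} (ha : ∀ g ∈ a.coeff.support, g ∈ Msub 1) :
    a * XMa K 0 = XMa K 0 * shiftA K a := by
  classical
  have h1 : a = ∑ g ∈ a.coeff.support, MonoidAlgebra.single g (a.coeff g) :=
    (MonoidAlgebra.sum_coeff_single a).symm
  rw [h1, Finset.sum_mul, map_sum, Finset.mul_sum]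
  refine Finset.sum_congr rfl fun g hg => ?_
  rw [shiftA_single, XMa, MonoidAlgebra.of_apply,
    MonoidAlgebra.single_mul_single, MonoidAlgebra.single_mul_single,
    mul_one, one_mul, gen_comm (ha g hg)]

lemma supp_shiftA (a : MonoidAlgebra K ThompsonM) :
    ∀ g ∈ (shiftA K a).coeff.support, g ∈ Msub 1 := by
  classical
  intro g hg
  have : (shiftA K a).coeff.support ⊆ a.coeff.support.image shiftM := Finsupp.mapDomain_support
  obtain ⟨h, _, rfl⟩ := Finset.mem_image.1 (this hg)
  exact shiftM_mem h

lemma mdeg_shiftA (a : MonoidAlgebra K ThompsonM) : mdeg (shiftA K a) ≤ mdeg a := by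
  classical
  apply Finset.sup_le
  intro g hg
  have : (shiftA K a).coeff.support ⊆ a.coeff.support.image shiftM := Finsupp.mapDomain_support
  obtain ⟨h, hh, rfl⟩ := Finset.mem_image.1 (this hg)
  rw [mlen_shiftM]
  exact Finset.le_sup hh

lemma supp_add {a b : MonoidAlgebra K ThompsonM}
    (ha : ∀ g ∈ a.coeff.support, g ∈ Msub 1) (hb : ∀ g ∈ b.coeff.support, g ∈ Msub 1) :
    ∀ g ∈ (a + b).coeff.support, g ∈ Msub 1 := by
  classical
  intro g hg
  rw [MonoidAlgebra.coeff_add] at hg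
  rcases Finset.mem_union.1 (Finsupp.support_add hg) with h | h
  · exact ha g h
  · exact hb g h

lemma supp_neg {a : MonoidAlgebra K ThompsonM}
    (ha : ∀ g ∈ a.coeff.support, g ∈ Msub 1) : ∀ g ∈ (-a).coeff.support, g ∈ Msub 1 := by
  intro g hg; exact ha g (by rwa [MonoidAlgebra.coeff_neg, Finsupp.support_neg] at hg)

lemma supp_mul {a b : MonoidAlgebra K ThompsonM}
    (ha : ∀ g ∈ a.coeff.support, g ∈ Msub 1) (hb : ∀ g ∈ b.coeff.support, g ∈ Msub 1) :
    ∀ g ∈ (a * b).coeff.support, g ∈ Msub 1 := by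
  classical
  intro g hg
  obtain ⟨g1, h1, g2, h2, rfl⟩ := Finset.mem_mul.1 (MonoidAlgebra.support_coeff_mul_subset a b hg)
  exact (Msub 1).mul_mem (ha g1 h1) (hb g2 h2)

lemma mdeg_add_le (a b : MonoidAlgebra K ThompsonM) :
    mdeg (a + b) ≤ max (mdeg a) (mdeg b) := by
  classical
  apply Finset.sup_le
  intro g hg
  rw [MonoidAlgebra.coeff_add] at hg
  rcases Finset.mem_union.1 (Finsupp.support_add hg) with h | h
  · exact le_max_of_le_left (Finset.le_sup h)
  · exact le_max_of_le_right (Finset.le_sup h)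

lemma mdeg_neg (a : MonoidAlgebra K ThompsonM) : mdeg (-a) = mdeg a := by
  rw [mdeg, mdeg, MonoidAlgebra.coeff_neg, Finsupp.support_neg]

lemma mdeg_mul_le (a b : MonoidAlgebra K ThompsonM) :
    mdeg (a * b) ≤ mdeg a + mdeg b := by
  classical
  apply Finset.sup_le
  intro g hg
  obtain ⟨g1, h1, g2, h2, rfl⟩ := Finset.mem_mul.1 (MonoidAlgebra.support_coeff_mul_subset a b hg)
  rw [mlen_mul]
  exact add_le_add (Finset.le_sup h1) (Finset.le_sup h2)

lemma mdeg_XMa (n : ℕ) : mdeg (XMa K n) ≤ 1 := by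
  classical
  apply Finset.sup_le
  intro g hg
  have : g = xM n := by
    simpa [XMa, MonoidAlgebra.of_apply] using Finsupp.support_single_subset hg
  simp [this, mlen_xM]

lemma mdeg_one : mdeg (1 : MonoidAlgebra K ThompsonM) = 0 := by
  classical
  apply Nat.le_antisymm _ (Nat.zero_le _)
  apply Finset.sup_le
  intro g hg
  have : g = (1 : ThompsonM) := by
    simpa [MonoidAlgebra.one_def] using Finsupp.support_single_subset hg
  simp [this, mlen_one]

lemma supp_XMa {n : ℕ} (hn : 1 ≤ n) : ∀ g ∈ (XMa K n).coeff.support, g ∈ Msub 1 := by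
  classical
  intro g hg
  have : g = xM n := by
    simpa [XMa, MonoidAlgebra.of_apply] using Finsupp.support_single_subset hg
  rw [this]; exact xM_mem_Msub hn

lemma supp_one : ∀ g ∈ (1 : MonoidAlgebra K ThompsonM).coeff.support, g ∈ Msub 1 := by
  classical
  intro g hg
  have : g = (1 : ThompsonM) := by
    simpa [MonoidAlgebra.one_def] using Finsupp.support_single_subset hg
  rw [this]; exact (Msub 1).one_mem

end Aux
/-- for every `k ≥ 2` there are `ξ_k, η_k ∈ K[M_1]` of degree
`≤ k-1` with `x_0^k ≡ x_0 ξ_k + η_k` modulo the right ideal `v_0 K[M]`,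
where `v_0 = 1 - x_3 - x_0² + x_0 x_1`. -/
theorem stmt12 (K : Type*) [Field K] (k : ℕ) (hk : 2 ≤ k) :
    ∃ ξ η : MonoidAlgebra K ThompsonM,
      (∀ g ∈ ξ.coeff.support, g ∈ Msub 1) ∧ (∀ g ∈ η.coeff.support, g ∈ Msub 1) ∧
      mdeg ξ ≤ k - 1 ∧ mdeg η ≤ k - 1 ∧
      ∃ w : MonoidAlgebra K ThompsonM,
        XMa K 0 ^ k =
          (1 - XMa K 3 - XMa K 0 ^ 2 + XMa K 0 * XMa K 1) * w + XMa K 0 * ξ + η := by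
  induction k, hk using Nat.le_induction with
  | base =>
    refine ⟨XMa K 1, 1 - XMa K 3, supp_XMa (n := 1) le_rfl, ?_, ?_, ?_, -1, by noncomm_ring⟩
    · have := supp_add (supp_one (K := K)) (supp_neg (supp_XMa (n := 3) (by norm_num)))
      simpa [sub_eq_add_neg] using this
    · simpa using mdeg_XMa (K := K) 1
    · have : mdeg (1 - XMa K 3) ≤ max (mdeg (1 : MonoidAlgebra K ThompsonM))
          (mdeg (-XMa K 3)) := by
        rw [sub_eq_add_neg]; exact mdeg_add_le _ _
      have h2 := mdeg_XMa (K := K) 3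
      rw [mdeg_neg, mdeg_one] at this
      omega
  | succ k hk ih =>
    obtain ⟨ξ, η, hξs, hηs, hξd, hηd, w, hw⟩ := ih
    have hcξ : ξ * XMa K 0 = XMa K 0 * shiftA K ξ := alg_comm hξs
    have hcη : η * XMa K 0 = XMa K 0 * shiftA K η := alg_comm hηs
    refine ⟨XMa K 1 * shiftA K ξ + shiftA K η, shiftA K ξ - XMa K 3 * shiftA K ξ,
      supp_add (supp_mul (supp_XMa (n := 1) le_rfl) (supp_shiftA ξ)) (supp_shiftA η), ?_, ?_, ?_,
      w * XMa K 0 - shiftA K ξ, ?_⟩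
    · have := supp_add (supp_shiftA (K := K) ξ)
        (supp_neg (supp_mul (supp_XMa (n := 3) (by norm_num)) (supp_shiftA ξ)))
      simpa [sub_eq_add_neg] using this
    · have h1 := mdeg_add_le (XMa K 1 * shiftA K ξ) (shiftA K η)
      have h2 := mdeg_mul_le (XMa K 1) (shiftA K ξ)
      have h3 := mdeg_XMa (K := K) 1
      have h4 := mdeg_shiftA (K := K) ξ
      have h5 := mdeg_shiftA (K := K) η
      omega
    · have h1 : mdeg (shiftA K ξ - XMa K 3 * shiftA K ξ) ≤
          max (mdeg (shiftA K ξ)) (mdeg (-(XMa K 3 * shiftA K ξ))) := by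
        rw [sub_eq_add_neg]; exact mdeg_add_le _ _
      have h2 := mdeg_mul_le (XMa K 3) (shiftA K ξ)
      have h3 := mdeg_XMa (K := K) 3
      have h4 := mdeg_shiftA (K := K) ξ
      rw [mdeg_neg] at h1
      omega
    · rw [pow_succ, hw, add_mul, add_mul, mul_assoc (XMa K 0) ξ (XMa K 0), hcξ, hcη]
      noncomm_ring
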